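/- Let V be a real separable Hilbert space, ω : [0,T] → V continuously differentiable with derivative ω', E ∈ L(W, L(V,W)) and K ∈ L(V,W). Define c_{ts}(E,K) := ∫_s^t S(t−r)( (E(K(ω(r) − ω(s))))(ω'(r)) ) dr (Bochner integral) for (t,s) ∈ Δ_T. Then for all 0 ≤ s ≤ τ ≤ t ≤ T one has (δ̂₂c)_{tτs}(E,K) := c_{ts}(E,K) − c_{tτ}(E,K) − S(t−τ)(c_{τs}(E,K)) = ∫_τ^t S(t−r)( (E(K(ω(τ) − ω(s))))(ω'(r)) ) dr. -/

import Mathlib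

open Filter Topology intervalIntegral

/-- A strongly continuous family of operators is jointly continuous in `(t, x)`. -/
lemma strong_cont_joint {W : Type*} [NormedAddCommGroup W] [NormedSpace ℝ W]
    [CompleteSpace W]
    (A : ℝ → W →L[ℝ] W) (hA : ∀ x : W, Continuous fun t => A t x) :
    Continuous fun p : ℝ × W => A p.1 p.2 := by
  rw [continuous_iff_continuousAt]
  rintro ⟨t₀, x₀⟩
  obtain ⟨C, hC⟩ : ∃ C, ∀ i : Set.Icc (t₀ - 1) (t₀ + 1), ‖A i‖ ≤ C := by
    apply banach_steinhaus
    intro x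
    obtain ⟨C, hC⟩ := (isCompact_Icc (a := t₀ - 1) (b := t₀ + 1)).exists_bound_of_continuousOn
      ((hA x).continuousOn (s := Set.Icc (t₀ - 1) (t₀ + 1)))
    exact ⟨C, fun i => hC i i.2⟩
  have hmem : ∀ᶠ p : ℝ × W in 𝓝 (t₀, x₀), p.1 ∈ Set.Icc (t₀ - 1) (t₀ + 1) := by
    have h1 : Set.Icc (t₀ - 1) (t₀ + 1) ∈ 𝓝 t₀ :=
      Icc_mem_nhds (by linarith) (by linarith)
    exact continuousAt_fst.preimage_mem_nhds h1
  have key : ∀ᶠ p : ℝ × W in 𝓝 (t₀, x₀), ‖A p.1 (p.2 - x₀)‖ ≤ C * ‖p.2 - x₀‖ := by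
    filter_upwards [hmem] with p hp
    calc ‖A p.1 (p.2 - x₀)‖ ≤ ‖A p.1‖ * ‖p.2 - x₀‖ := (A p.1).le_opNorm _
    _ ≤ C * ‖p.2 - x₀‖ := by
        have := hC ⟨p.1, hp⟩
        exact mul_le_mul_of_nonneg_right this (norm_nonneg _)
  have h0 : Tendsto (fun p : ℝ × W => A p.1 (p.2 - x₀)) (𝓝 (t₀, x₀)) (𝓝 0) := by
    apply squeeze_zero_norm' key
    have h2 : Tendsto (fun p : ℝ × W => C * ‖p.2 - x₀‖) (𝓝 (t₀, x₀))
        (𝓝 (C * ‖x₀ - x₀‖)) := by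
      exact (tendsto_const_nhds.mul ((continuous_snd.sub continuous_const).norm.tendsto _))
    simpa using h2
  have h1 : Tendsto (fun p : ℝ × W => A p.1 x₀) (𝓝 (t₀, x₀)) (𝓝 (A t₀ x₀)) :=
    ((hA x₀).tendsto t₀).comp (continuous_fst.tendsto _)
  have := h0.add h1
  simp only [zero_add] at this
  have h3 : Tendsto (fun p : ℝ × W => A p.1 p.2) (𝓝 (t₀, x₀)) (𝓝 (A t₀ x₀)) :=
    this.congr fun p => by simp [map_sub]
  exact h3

theorem c_process_algebraic_relation
    {W V : Type*} [NormedAddCommGroup W] [NormedSpace ℝ W] [CompleteSpace W]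
    [NormedAddCommGroup V] [InnerProductSpace ℝ V] [CompleteSpace V]
    [TopologicalSpace.SeparableSpace V]
    (T : ℝ) (hT : 0 < T)
    (S : ℝ → W →L[ℝ] W)
    (hS0 : S 0 = ContinuousLinearMap.id ℝ W)
    (hSadd : ∀ t s : ℝ, 0 ≤ t → 0 ≤ s → S (t + s) = (S t).comp (S s))
    (hScont : ∀ x : W, Continuous fun t => S t x)
    (ω ω' : ℝ → V)
    (hω : ∀ r ∈ Set.Icc (0 : ℝ) T, HasDerivWithinAt ω (ω' r) (Set.Icc 0 T) r)
    (hω' : ContinuousOn ω' (Set.Icc 0 T))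
    (E : W →L[ℝ] V →L[ℝ] W) (K : V →L[ℝ] W)
    (s τ t : ℝ) (hs : 0 ≤ s) (hsτ : s ≤ τ) (hτt : τ ≤ t) (htT : t ≤ T) :
    (∫ r in s..t, S (t - r) ((E (K (ω r - ω s))) (ω' r))) -
      (∫ r in τ..t, S (t - r) ((E (K (ω r - ω τ))) (ω' r))) -
      S (t - τ) (∫ r in s..τ, S (τ - r) ((E (K (ω r - ω s))) (ω' r))) =
    ∫ r in τ..t, S (t - r) ((E (K (ω τ - ω s))) (ω' r)) := by
  have hωc : ContinuousOn ω (Set.Icc 0 T) := fun r hr => (hω r hr).continuousWithinAt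
  have hjoint := strong_cont_joint S hScont
  -- generic continuity of integrands
  have hcont : ∀ (a b : ℝ) (v : ℝ → V), ContinuousOn v (Set.Icc 0 T) →
      ContinuousOn (fun r => S (a - r) ((E (K (v r))) (ω' r))) (Set.Icc 0 T) := by
    intro a b v hv
    have h2 : ContinuousOn (fun r => (E (K (v r))) (ω' r)) (Set.Icc 0 T) := by
      have hE : ContinuousOn (fun r => E (K (v r))) (Set.Icc 0 T) :=
        E.continuous.comp_continuousOn (K.continuous.comp_continuousOn hv)
      exact hE.clm_apply hω'
    exact hjoint.comp_continuousOn
      (ContinuousOn.prodMk ((continuous_const.sub continuous_id).continuousOn) h2)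
  have hsub1 : Set.uIcc s τ ⊆ Set.Icc 0 T := by
    rw [Set.uIcc_of_le hsτ]; exact Set.Icc_subset_Icc hs (by linarith)
  have hsub2 : Set.uIcc τ t ⊆ Set.Icc 0 T := by
    rw [Set.uIcc_of_le hτt]; exact Set.Icc_subset_Icc (by linarith) htT
  have hsub3 : Set.uIcc s t ⊆ Set.Icc 0 T := by
    rw [Set.uIcc_of_le (hsτ.trans hτt)]; exact Set.Icc_subset_Icc hs htT
  have hωs : ContinuousOn (fun r => ω r - ω s) (Set.Icc 0 T) := hωc.sub continuousOn_const
  have hωτ : ContinuousOn (fun r => ω r - ω τ) (Set.Icc 0 T) := hωc.sub continuousOn_const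
  have hωconst : ContinuousOn (fun _ : ℝ => ω τ - ω s) (Set.Icc 0 T) := continuousOn_const
  -- integrabilities
  have hi1 : IntervalIntegrable (fun r => S (t - r) ((E (K (ω r - ω s))) (ω' r)))
      MeasureTheory.volume s τ :=
    ((hcont t t _ hωs).mono hsub1).intervalIntegrable
  have hi2 : IntervalIntegrable (fun r => S (t - r) ((E (K (ω r - ω s))) (ω' r)))
      MeasureTheory.volume τ t :=
    ((hcont t t _ hωs).mono hsub2).intervalIntegrable
  have hi3 : IntervalIntegrable (fun r => S (t - r) ((E (K (ω r - ω τ))) (ω' r)))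
      MeasureTheory.volume τ t :=
    ((hcont t t _ hωτ).mono hsub2).intervalIntegrable
  have hi4 : IntervalIntegrable (fun r => S (τ - r) ((E (K (ω r - ω s))) (ω' r)))
      MeasureTheory.volume s τ :=
    ((hcont τ τ _ hωs).mono hsub1).intervalIntegrable
  -- step 1 : split the first integral
  have hsplit : (∫ r in s..t, S (t - r) ((E (K (ω r - ω s))) (ω' r))) =
      (∫ r in s..τ, S (t - r) ((E (K (ω r - ω s))) (ω' r))) +
      (∫ r in τ..t, S (t - r) ((E (K (ω r - ω s))) (ω' r))) :=
    (integral_add_adjacent_intervals hi1 hi2).symm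
  -- step 2 : push S (t - τ) inside the third integral
  have hpush : S (t - τ) (∫ r in s..τ, S (τ - r) ((E (K (ω r - ω s))) (ω' r))) =
      ∫ r in s..τ, S (t - r) ((E (K (ω r - ω s))) (ω' r)) := by
    rw [← ContinuousLinearMap.intervalIntegral_comp_comm _ hi4]
    apply integral_congr
    intro r hr
    rw [Set.uIcc_of_le hsτ] at hr
    have h1 : 0 ≤ t - τ := by linarith
    have h2 : 0 ≤ τ - r := by linarith [hr.2]
    have := hSadd (t - τ) (τ - r) h1 h2
    have heq : t - τ + (τ - r) = t - r := by ring
    rw [heq] at this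
    dsimp only
    rw [this]; rfl
  -- step 3 : combine the two integrals over [τ, t]
  have hcomb : (∫ r in τ..t, S (t - r) ((E (K (ω r - ω s))) (ω' r))) -
      (∫ r in τ..t, S (t - r) ((E (K (ω r - ω τ))) (ω' r))) =
      ∫ r in τ..t, S (t - r) ((E (K (ω τ - ω s))) (ω' r)) := by
    rw [← integral_sub hi2 hi3]
    apply integral_congr
    intro r _
    have hK : K (ω r - ω s) - K (ω r - ω τ) = K (ω τ - ω s) := by
      rw [← map_sub]; congr 1; abel
    dsimp only
    rw [← map_sub (S (t - r))]
    congr 1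
    rw [← ContinuousLinearMap.sub_apply, ← map_sub, hK]
  rw [hsplit, hpush, ← hcomb]
  abel
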